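/- Suppose 0 < ℋ^s_w(K) < ∞, where s = n·ln(#𝒟)/ln q. Then two finite words 𝐢, 𝐣 over {1,…,N} are incomparable if and only if ℋ^s_w(K_𝐢 ∩ K_𝐣) = 0. -/

import Mathlib

open MeasureTheory Set ENNReal NNReal

noncomputable section

/-- Points of `ℝⁿ` with the Euclidean norm. -/
abbrev Pt (n : ℕ) := EuclideanSpace ℝ (Fin n)

/-- The action of an `n × n` real matrix on Euclidean space. -/
def mapp {n : ℕ} (A : Matrix (Fin n) (Fin n) ℝ) (x : Pt n) : Pt n :=
  Matrix.toEuclideanLin A x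

/-- A real matrix is expanding if all of its (complex) eigenvalues have modulus `> 1`. -/
def IsExpandingMatrix {n : ℕ} (A : Matrix (Fin n) (Fin n) ℝ) : Prop :=
  ∀ μ ∈ spectrum ℂ (A.map (fun a => (a : ℂ))), 1 < ‖μ‖

/-- The diameter of a set with respect to the pseudo norm `w`. -/
def pdiam {n : ℕ} (w : Pt n → ℝ) (E : Set (Pt n)) : ℝ≥0∞ :=
  ⨆ (x ∈ E) (y ∈ E), ENNReal.ofReal (w (x - y))

/-- The `δ`-approximation of the `s`-dimensional pseudo Hausdorff measure. -/
def preHw {n : ℕ} (w : Pt n → ℝ) (s δ : ℝ) (E : Set (Pt n)) : ℝ≥0∞ :=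
  ⨅ (U : ℕ → Set (Pt n)) (_ : E ⊆ ⋃ i, U i)
    (_ : ∀ i, pdiam w (U i) ≤ ENNReal.ofReal δ), ∑' i, pdiam w (U i) ^ s

/-- The `s`-dimensional pseudo Hausdorff measure w.r.t. the pseudo norm `w`. -/
def Hw {n : ℕ} (w : Pt n → ℝ) (s : ℝ) (E : Set (Pt n)) : ℝ≥0∞ :=
  ⨆ (δ : ℝ) (_ : 0 < δ), preHw w s δ E

/-- Carathéodory measurability with respect to the outer measure `Hw w s`. -/
def HwMeasurable {n : ℕ} (w : Pt n → ℝ) (s : ℝ) (E : Set (Pt n)) : Prop :=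
  ∀ T : Set (Pt n), Hw w s T = Hw w s (T ∩ E) + Hw w s (T \ E)

/-- A pseudo norm associated with the expanding matrix `A`. -/
structure IsPseudoNorm {n : ℕ} (A : Matrix (Fin n) (Fin n) ℝ) (w : Pt n → ℝ) : Prop where
  continuous : Continuous w
  nonneg : ∀ x, 0 ≤ w x
  neg : ∀ x, w (-x) = w x
  eq_zero_iff : ∀ x, w x = 0 ↔ x = 0
  scaling : ∀ x, w (mapp A x) = |A.det| ^ ((1 : ℝ) / n) * w x
  quasi_triangle : ∃ β > (0 : ℝ), ∀ x y, w (x + y) ≤ β * max (w x) (w y)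
  comparable : ∃ C > (0 : ℝ), ∃ α₁ > (0 : ℝ), ∃ α₂ > (0 : ℝ),
    (∀ x : Pt n, 1 < ‖x‖ → C⁻¹ * ‖x‖ ^ α₁ ≤ w x ∧ w x ≤ C * ‖x‖ ^ α₂) ∧
    (∀ x : Pt n, ‖x‖ ≤ 1 → C⁻¹ * ‖x‖ ^ α₂ ≤ w x ∧ w x ≤ C * ‖x‖ ^ α₁)

/-- The map `f_d(x) = A⁻¹(x + d)` of the self-affine IFS. -/
def fIFS {n : ℕ} (A : Matrix (Fin n) (Fin n) ℝ) (d : Pt n) (x : Pt n) : Pt n :=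
  mapp A⁻¹ (x + d)

/-- The open set condition for the IFS `{f_d}_{d ∈ D}`. -/
def OSC {n : ℕ} (A : Matrix (Fin n) (Fin n) ℝ) (D : Finset (Pt n)) : Prop :=
  ∃ V : Set (Pt n), V.Nonempty ∧ IsOpen V ∧ Bornology.IsBounded V ∧
    (⋃ d ∈ D, fIFS A d '' V) ⊆ V ∧
    ∀ d ∈ D, ∀ d' ∈ D, d ≠ d' → fIFS A d '' V ∩ fIFS A d' '' V = ∅

/-- `K` is the self-affine set (attractor) for the pair `(A, D)`:
a nonempty compact set with `A K = ⋃_{d ∈ D} (K + d)`. -/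
def IsSelfAffineSet {n : ℕ} (A : Matrix (Fin n) (Fin n) ℝ) (D : Finset (Pt n))
    (K : Set (Pt n)) : Prop :=
  K.Nonempty ∧ IsCompact K ∧ mapp A '' K = ⋃ d ∈ D, (fun x => x + d) '' K

/-- The set `𝒟_M` of `M`-fold expansions `Σ_{j<M} A^j d_j`. -/
def DsetM {n : ℕ} (A : Matrix (Fin n) (Fin n) ℝ) (D : Finset (Pt n)) (M : ℕ) :
    Set (Pt n) :=
  {x | ∃ d : Fin M → Pt n, (∀ j, d j ∈ D) ∧ x = ∑ j : Fin M, mapp (A ^ (j : ℕ)) (d j)}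

/-- The set `𝒟_∞ = ⋃_{M ≥ 1} 𝒟_M`. -/
def DsetInf {n : ℕ} (A : Matrix (Fin n) (Fin n) ℝ) (D : Finset (Pt n)) : Set (Pt n) :=
  ⋃ (M : ℕ) (_ : 1 ≤ M), DsetM A D M

/-- A set is uniformly discrete if distinct points are uniformly separated. -/
def UniformlyDiscrete {n : ℕ} (S : Set (Pt n)) : Prop :=
  ∃ δ > (0 : ℝ), ∀ x ∈ S, ∀ y ∈ S, x ≠ y → δ < ‖x - y‖

/-- `σ` is the invariant (self-affine) probability measure of the IFS `{f_d}_{d ∈ D}`. -/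
def IsInvariantMeasure {n : ℕ} (A : Matrix (Fin n) (Fin n) ℝ) (D : Finset (Pt n))
    (σ : Measure (Pt n)) : Prop :=
  IsProbabilityMeasure σ ∧
  ∀ f : Pt n → ℝ, Continuous f → HasCompactSupport f →
    ∫ x, f x ∂σ = ((D.card : ℝ))⁻¹ * ∑ d ∈ D, ∫ x, f (fIFS A d x) ∂σ

/-- The measure `μ_M = Σ_{d_0,…,d_{M−1} ∈ 𝒟} δ_{d_0 + A d_1 + ⋯ + A^{M−1} d_{M−1}}`. -/
def muM {n : ℕ} (A : Matrix (Fin n) (Fin n) ℝ) (D : Finset (Pt n)) (M : ℕ) :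
    Measure (Pt n) :=
  ∑ d ∈ (Finset.univ : Finset (Fin M → {x : Pt n // x ∈ D})),
    Measure.dirac (∑ j : Fin M, mapp (A ^ (j : ℕ)) ((d j : Pt n)))

/-- Convolution of two Borel measures on `ℝⁿ`. -/
def mconv {n : ℕ} (μ ν : Measure (Pt n)) : Measure (Pt n) :=
  Measure.map (fun p : Pt n × Pt n => p.1 + p.2) (μ.prod ν)

/-- The upper `s`-density `ℰ⁺_{w,s}(ν)` of a Borel measure `ν` w.r.t. the pseudo norm `w`. -/
def upperDensity {n : ℕ} (w : Pt n → ℝ) (s : ℝ) (ν : Measure (Pt n)) : ℝ≥0∞ :=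
  ⨅ (r : ℝ) (_ : 0 < r),
    ⨆ (U : Set (Pt n)) (_ : IsCompact U) (_ : Convex ℝ U)
      (_ : ENNReal.ofReal r ≤ pdiam w U), ν U / pdiam w U ^ s

/-- The upper convex `s`-density `D^s_{w,c}(E, x)` of `E` at `x` w.r.t. `w`. -/
def upperConvexDensity {n : ℕ} (w : Pt n → ℝ) (s : ℝ) (E : Set (Pt n)) (x : Pt n) :
    ℝ≥0∞ :=
  ⨅ (r : ℝ) (_ : 0 < r),
    ⨆ (U : Set (Pt n)) (_ : Convex ℝ U) (_ : x ∈ U) (_ : 0 < pdiam w U)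
      (_ : pdiam w U ≤ ENNReal.ofReal r), Hw w s (E ∩ U) / pdiam w U ^ s

/-- The pseudo Hausdorff dimension `dim_H^w E = inf {s ≥ 0 : ℋ^s_w(E) = 0}`. -/
def dimHw {n : ℕ} (w : Pt n → ℝ) (E : Set (Pt n)) : ℝ≥0∞ :=
  ⨅ (t : ℝ≥0) (_ : Hw w (t : ℝ) E = 0), (t : ℝ≥0∞)

/-- `𝒱` is a Vitali class for `E` w.r.t. `w`. -/
def VitaliClass {n : ℕ} (w : Pt n → ℝ) (𝒱 : Set (Set (Pt n))) (E : Set (Pt n)) : Prop :=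
  ∀ x ∈ E, ∀ δ : ℝ, 0 < δ →
    ∃ U ∈ 𝒱, x ∈ U ∧ 0 < pdiam w U ∧ pdiam w U ≤ ENNReal.ofReal δ

/-- The composite map `f_𝐢 = f_{i₁} ∘ ⋯ ∘ f_{i_m}` associated with a word of digits. -/
def fWord {n : ℕ} (A : Matrix (Fin n) (Fin n) ℝ) (i : List (Pt n)) (x : Pt n) : Pt n :=
  i.foldr (fun d y => fIFS A d y) x

namespace HwAux

variable {n : ℕ}

lemma pdiam_empty (w : Pt n → ℝ) : pdiam w ∅ = 0 := by simp [pdiam]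

lemma le_pdiam (w : Pt n → ℝ) {E : Set (Pt n)} {x y : Pt n} (hx : x ∈ E) (hy : y ∈ E) :
    ENNReal.ofReal (w (x - y)) ≤ pdiam w E := by
  refine le_trans ?_ (le_iSup₂ (f := fun x (_ : x ∈ E) => ⨆ y ∈ E, ENNReal.ofReal (w (x - y))) x hx)
  exact le_iSup₂ (f := fun y (_ : y ∈ E) => ENNReal.ofReal (w (x - y))) y hy

lemma pdiam_image (w : Pt n → ℝ) {T : Pt n → Pt n} {t : ℝ} (ht : 0 ≤ t)
    (hT : ∀ x y, w (T x - T y) = t * w (x - y)) (U : Set (Pt n)) :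
    pdiam w (T '' U) = ENNReal.ofReal t * pdiam w U := by
  rw [pdiam, pdiam, iSup_image, ENNReal.mul_iSup]
  refine iSup_congr fun x => ?_
  rw [ENNReal.mul_iSup]
  refine iSup_congr fun hx => ?_
  rw [iSup_image, ENNReal.mul_iSup]
  refine iSup_congr fun y => ?_
  rw [ENNReal.mul_iSup]
  refine iSup_congr fun hy => ?_
  rw [hT, ENNReal.ofReal_mul ht]

/-- The gauge function for the `δ`-approximation. -/
def mdelta (w : Pt n → ℝ) (s δ : ℝ) (U : Set (Pt n)) : ℝ≥0∞ :=
  if pdiam w U ≤ ENNReal.ofReal δ then pdiam w U ^ s else ⊤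

lemma mdelta_empty (w : Pt n → ℝ) {s : ℝ} (hs : 0 < s) (δ : ℝ) : mdelta w s δ ∅ = 0 := by
  rw [mdelta, if_pos (by simp [pdiam_empty]), pdiam_empty, ENNReal.zero_rpow_of_pos hs]

/-- The `δ`-approximation as an outer measure. -/
def OFm (w : Pt n → ℝ) {s : ℝ} (hs : 0 < s) (δ : ℝ) : OuterMeasure (Pt n) :=
  OuterMeasure.ofFunction (mdelta w s δ) (mdelta_empty w hs δ)

lemma preHw_eq_OFm (w : Pt n → ℝ) {s : ℝ} (hs : 0 < s) (δ : ℝ) (E : Set (Pt n)) :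
    preHw w s δ E = OFm w hs δ E := by
  rw [OFm, OuterMeasure.ofFunction_apply, preHw]
  refine le_antisymm (le_iInf₂ fun U hU => ?_) (le_iInf₂ fun U hU => le_iInf fun hc => ?_)
  · by_cases hc : ∀ i, pdiam w (U i) ≤ ENNReal.ofReal δ
    · refine le_trans (iInf₂_le_of_le U hU (iInf_le_of_le hc le_rfl)) ?_
      exact le_of_eq (tsum_congr fun i => (if_pos (hc i)).symm)
    · push_neg at hc
      obtain ⟨i, hi⟩ := hc
      have h2 : mdelta w s δ (U i) = ⊤ := if_neg (by exact fun h => hi.not_ge h)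
      exact le_trans le_top (le_trans (le_of_eq h2.symm) (ENNReal.le_tsum i))
  · refine le_trans (iInf₂_le U hU) (le_of_eq (tsum_congr fun i => if_pos (hc i)))

lemma preHw_anti (w : Pt n → ℝ) (s : ℝ) {δ₁ δ₂ : ℝ} (h : δ₁ ≤ δ₂) (E : Set (Pt n)) :
    preHw w s δ₂ E ≤ preHw w s δ₁ E := by
  refine le_iInf₂ fun U hU => le_iInf fun hc => ?_
  exact iInf₂_le_of_le U hU (iInf_le_of_le
    (fun i => le_trans (hc i) (ENNReal.ofReal_le_ofReal h)) le_rfl)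

/-- The pseudo Hausdorff outer measure. -/
def muOM (w : Pt n → ℝ) {s : ℝ} (hs : 0 < s) : OuterMeasure (Pt n) :=
  ⨆ k : ℕ, OFm w hs (1 / (k + 1))

lemma OFm_mono_m (w : Pt n → ℝ) {s : ℝ} (hs : 0 < s) {δ₁ δ₂ : ℝ} (h : δ₁ ≤ δ₂)
    (E : Set (Pt n)) : OFm w hs δ₂ E ≤ OFm w hs δ₁ E := by
  rw [← preHw_eq_OFm, ← preHw_eq_OFm]; exact preHw_anti w s h E

lemma Hw_eq_muOM (w : Pt n → ℝ) {s : ℝ} (hs : 0 < s) (E : Set (Pt n)) :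
    Hw w s E = muOM w hs E := by
  rw [muOM, OuterMeasure.iSup_apply, Hw]
  refine le_antisymm (iSup₂_le fun δ hδ => ?_) (iSup_le fun k => ?_)
  · obtain ⟨k, hk⟩ := exists_nat_one_div_lt hδ
    refine le_trans ?_ (le_iSup _ k)
    rw [← preHw_eq_OFm]
    exact preHw_anti w s (le_of_lt (by exact_mod_cast hk)) E
  · rw [← preHw_eq_OFm]
    have hpos : (0:ℝ) < 1 / (k + 1) := by positivity
    exact le_iSup₂ (f := fun δ (_ : 0 < δ) => preHw w s δ E) (1 / (k + 1)) hpos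

lemma Hw_zero_top (w : Pt n → ℝ) (E : Set (Pt n)) : Hw w 0 E = ⊤ := by
  have h1 : preHw w 0 1 E = ⊤ := by
    rw [preHw, eq_top_iff]
    refine le_iInf₂ fun U hU => le_iInf fun hc => ?_
    simp only [ENNReal.rpow_zero]
    rw [ENNReal.tsum_const_eq_top_of_ne_zero one_ne_zero]
  rw [eq_top_iff, Hw]
  exact le_trans (le_of_eq h1.symm)
    (le_iSup₂ (f := fun δ (_ : (0:ℝ) < δ) => preHw w 0 δ E) 1 one_pos)

/-- Lower bound for `w` away from the origin. -/
lemma w_lower (w : Pt n → ℝ) {C α₁ α₂ : ℝ} (hC : 0 < C) (hα₁ : 0 < α₁) (hα₂ : 0 < α₂)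
    (h1 : ∀ x : Pt n, 1 < ‖x‖ → C⁻¹ * ‖x‖ ^ α₁ ≤ w x)
    (h2 : ∀ x : Pt n, ‖x‖ ≤ 1 → C⁻¹ * ‖x‖ ^ α₂ ≤ w x)
    {r : ℝ} (hr : 0 < r) :
    ∃ c > 0, ∀ z : Pt n, r ≤ ‖z‖ → c ≤ w z := by
  refine ⟨C⁻¹ * min r 1 ^ α₂, by positivity, fun z hz => ?_⟩
  rcases le_or_gt ‖z‖ 1 with h | h
  · refine le_trans ?_ (h2 z h)
    have h01 : min r 1 ≤ ‖z‖ := le_trans (min_le_left _ _) hz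
    have hm0 : (0:ℝ) ≤ min r 1 := le_of_lt (lt_min hr one_pos)
    gcongr
  · refine le_trans ?_ (h1 z h)
    have hm0 : (0:ℝ) ≤ min r 1 := le_of_lt (lt_min hr one_pos)
    have hle1 : min r 1 ^ α₂ ≤ 1 := Real.rpow_le_one hm0 (min_le_right _ _) (le_of_lt hα₂)
    have h1' : (1:ℝ) ≤ ‖z‖ ^ α₁ := Real.one_le_rpow (le_of_lt h) (le_of_lt hα₁)
    nlinarith [inv_pos.mpr hC]

lemma muOM_isMetric (w : Pt n → ℝ) {s : ℝ} (hs : 0 < s)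
    {C α₁ α₂ : ℝ} (hC : 0 < C) (hα₁ : 0 < α₁) (hα₂ : 0 < α₂)
    (h1 : ∀ x : Pt n, 1 < ‖x‖ → C⁻¹ * ‖x‖ ^ α₁ ≤ w x)
    (h2 : ∀ x : Pt n, ‖x‖ ≤ 1 → C⁻¹ * ‖x‖ ^ α₂ ≤ w x) :
    (muOM w hs).IsMetric := by
  intro S T hST
  refine le_antisymm (measure_union_le _ _) ?_
  obtain ⟨r, hr0, hr⟩ := hST
  set r' : ℝ≥0∞ := min r 1 with hr'
  have hr'0 : r' ≠ 0 := by
    simp only [hr', ne_eq, min_eq_iff]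
    rintro (⟨h, -⟩ | ⟨h, -⟩) <;> simp_all
  have hr't : r' ≠ ⊤ := by
    simp only [hr']
    exact ne_top_of_le_ne_top one_ne_top (min_le_right _ _)
  have hr'pos : 0 < r'.toReal := ENNReal.toReal_pos hr'0 hr't
  have hsep : ∀ x ∈ S, ∀ y ∈ T, r'.toReal ≤ ‖x - y‖ := by
    intro x hx y hy
    have h1' : r' ≤ edist x y := le_trans (min_le_left _ _) (hr x hx y hy)
    rw [edist_dist] at h1'
    rw [← dist_eq_norm]
    exact (ENNReal.le_ofReal_iff_toReal_le hr't dist_nonneg).mp h1'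
  obtain ⟨c, hc, hcw⟩ := w_lower w hC hα₁ hα₂ h1 h2 hr'pos
  have hkey : ∀ δ : ℝ, δ ≤ c / 2 → ∀ u : Set (Pt n),
      (S ∩ u).Nonempty → (T ∩ u).Nonempty → mdelta w s δ u = ⊤ := by
    rintro δ hδ u ⟨x, hxS, hxu⟩ ⟨y, hyT, hyu⟩
    rw [mdelta, if_neg]
    intro hle
    have h3 : ENNReal.ofReal (w (x - y)) ≤ ENNReal.ofReal (max δ 0) :=
      le_trans (le_trans (le_pdiam w hxu hyu) hle)
        (ENNReal.ofReal_le_ofReal (le_max_left δ 0))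
    have h4 : c ≤ w (x - y) := hcw _ (hsep x hxS y hyT)
    have h5 : w (x - y) ≤ max δ 0 := (ENNReal.ofReal_le_ofReal_iff (le_max_right δ 0)).mp h3
    have h6 : max δ 0 ≤ c / 2 := max_le hδ (by positivity)
    linarith
  obtain ⟨k₀, hk₀⟩ := exists_nat_one_div_lt (show (0:ℝ) < c / 2 by positivity)
  have hδk : ∀ k : ℕ, (0:ℝ) < 1 / (k + k₀ + 1) ∧ (1:ℝ) / (k + k₀ + 1) ≤ c / 2 := by
    intro k
    constructor
    · positivity
    · refine le_trans ?_ (le_of_lt hk₀)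
      rw [div_le_div_iff₀ (by positivity) (by positivity)]
      have : ((k₀:ℝ) + 1) ≤ (k + k₀ + 1) := by push_cast; linarith [Nat.cast_nonneg (α := ℝ) k]
      nlinarith
  have hshift : ∀ E : Set (Pt n), muOM w hs E = ⨆ k : ℕ, OFm w hs (1 / (k + k₀ + 1)) E := by
    intro E
    rw [muOM, OuterMeasure.iSup_apply]
    refine le_antisymm (iSup_le fun k => ?_) (iSup_le fun k => ?_)
    · refine le_trans (OFm_mono_m w hs ?_ E)
        (le_iSup (fun k : ℕ => OFm w hs (1 / (k + k₀ + 1)) E) k)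
      rw [div_le_div_iff₀ (by positivity) (by positivity)]
      have : (0:ℝ) ≤ (k₀:ℝ) := Nat.cast_nonneg k₀
      nlinarith
    · refine le_trans (le_of_eq ?_) (le_iSup (fun k : ℕ => OFm w hs (1 / (k + 1)) E) (k + k₀))
      congr 2
      push_cast
      ring
  have hunion : ∀ k : ℕ, OFm w hs (1 / (k + k₀ + 1)) (S ∪ T)
      = OFm w hs (1 / (k + k₀ + 1)) S + OFm w hs (1 / (k + k₀ + 1)) T := by
    intro k
    exact OuterMeasure.ofFunction_union_of_top_of_nonempty_inter
      (fun u hSu hTu => hkey _ (hδk k).2 u hSu hTu)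
  rw [hshift (S ∪ T), hshift S, hshift T]
  have hmonoS : Monotone fun k : ℕ => OFm w hs (1 / (k + k₀ + 1)) S := by
    intro k k' hk
    refine OFm_mono_m w hs ?_ S
    rw [div_le_div_iff₀ (by positivity) (by positivity)]
    have : (k:ℝ) ≤ (k':ℝ) := by exact_mod_cast hk
    nlinarith
  have hmonoT : Monotone fun k : ℕ => OFm w hs (1 / (k + k₀ + 1)) T := by
    intro k k' hk
    refine OFm_mono_m w hs ?_ T
    rw [div_le_div_iff₀ (by positivity) (by positivity)]
    have : (k:ℝ) ≤ (k':ℝ) := by exact_mod_cast hk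
    nlinarith
  rw [ENNReal.iSup_add_iSup_of_monotone hmonoS hmonoT]
  exact le_of_eq (iSup_congr fun k => (hunion k).symm)

/-- The pseudo Hausdorff measure as a Borel measure. -/
def nuHw (w : Pt n → ℝ) {s : ℝ} (hs : 0 < s) (hmet : (muOM w hs).IsMetric) : Measure (Pt n) :=
  (muOM w hs).toMeasure hmet.le_caratheodory

lemma nuHw_apply (w : Pt n → ℝ) {s : ℝ} (hs : 0 < s) (hmet : (muOM w hs).IsMetric)
    {E : Set (Pt n)} (hE : MeasurableSet E) : nuHw w hs hmet E = Hw w s E := by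
  rw [nuHw, toMeasure_apply _ _ hE, Hw_eq_muOM w hs]

lemma Hw_image_le (w : Pt n → ℝ) {s : ℝ} (hs : 0 < s) {T : Pt n → Pt n} {t : ℝ}
    (ht : 0 < t) (hT : ∀ x y, w (T x - T y) = t * w (x - y)) (E : Set (Pt n)) :
    Hw w s (T '' E) ≤ ENNReal.ofReal t ^ s * Hw w s E := by
  set a := ENNReal.ofReal t ^ s with ha
  have ha0 : a ≠ 0 :=
    (ENNReal.rpow_pos (ENNReal.ofReal_pos.mpr ht) ENNReal.ofReal_ne_top).ne'
  have hat : a ≠ ⊤ :=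
    (ENNReal.rpow_lt_top_of_nonneg (le_of_lt hs) ENNReal.ofReal_ne_top).ne
  rw [Hw]
  refine iSup₂_le fun δ' hδ' => ?_
  have hδ : 0 < δ' / t := by positivity
  have hdiv : preHw w s δ' (T '' E) / a ≤ preHw w s (δ' / t) E := by
    rw [preHw]
    refine le_iInf₂ fun U hU => le_iInf fun hc => ?_
    rw [ENNReal.div_le_iff_le_mul (Or.inl ha0) (Or.inl hat)]
    have hcov : T '' E ⊆ ⋃ i, T '' U i := by
      rw [← image_iUnion]; exact image_mono hU
    have hceach : ∀ i, pdiam w (T '' U i) ≤ ENNReal.ofReal δ' := by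
      intro i
      rw [pdiam_image w (le_of_lt ht) hT]
      calc ENNReal.ofReal t * pdiam w (U i)
          ≤ ENNReal.ofReal t * ENNReal.ofReal (δ' / t) := mul_le_mul_right (hc i) _
        _ = ENNReal.ofReal δ' := by
            rw [← ENNReal.ofReal_mul (le_of_lt ht)]
            congr 1
            field_simp
    refine le_trans (iInf₂_le_of_le (fun i => T '' U i) hcov (iInf_le_of_le hceach le_rfl)) ?_
    have heq : ∑' i, pdiam w (T '' U i) ^ s = a * ∑' i, pdiam w (U i) ^ s := by
      rw [← ENNReal.tsum_mul_left]
      refine tsum_congr fun i => ?_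
      rw [pdiam_image w (le_of_lt ht) hT,
        ENNReal.mul_rpow_of_nonneg _ _ (le_of_lt hs), ha]
    rw [heq, mul_comm]
  have hstep : preHw w s δ' (T '' E) ≤ a * preHw w s (δ' / t) E := by
    calc preHw w s δ' (T '' E) = a * (preHw w s δ' (T '' E) / a) := by
          rw [mul_comm, ENNReal.div_mul_cancel ha0 hat]
      _ ≤ a * preHw w s (δ' / t) E := mul_le_mul_right hdiv a
  refine le_trans hstep (mul_le_mul_right ?_ a)
  exact le_iSup₂ (f := fun δ (_ : (0:ℝ) < δ) => preHw w s δ E) (δ' / t) hδ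

lemma Hw_image_eq (w : Pt n → ℝ) {s : ℝ} (hs : 0 < s) {T S : Pt n → Pt n} {t : ℝ}
    (ht : 0 < t) (hT : ∀ x y, w (T x - T y) = t * w (x - y))
    (hS : ∀ x y, w (S x - S y) = t⁻¹ * w (x - y))
    (hST : ∀ x, S (T x) = x) (E : Set (Pt n)) :
    Hw w s (T '' E) = ENNReal.ofReal t ^ s * Hw w s E := by
  have h1 := Hw_image_le w hs ht hT E
  have h2 := Hw_image_le w hs (inv_pos.mpr ht) hS (T '' E)
  rw [image_image] at h2
  simp only [hST, image_id'] at h2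
  refine le_antisymm h1 ?_
  have key : ENNReal.ofReal t ^ s * ENNReal.ofReal t⁻¹ ^ s = 1 := by
    rw [← ENNReal.mul_rpow_of_nonneg _ _ (le_of_lt hs), ← ENNReal.ofReal_mul (le_of_lt ht),
      mul_inv_cancel₀ (ne_of_gt ht), ENNReal.ofReal_one, ENNReal.one_rpow]
  calc ENNReal.ofReal t ^ s * Hw w s E
      ≤ ENNReal.ofReal t ^ s * (ENNReal.ofReal t⁻¹ ^ s * Hw w s (T '' E)) :=
        mul_le_mul_right h2 _
    _ = Hw w s (T '' E) := by rw [← mul_assoc, key, one_mul]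

/- matrix action lemmas -/

lemma mapp_mul (A B : Matrix (Fin n) (Fin n) ℝ) (x : Pt n) :
    mapp (A * B) x = mapp A (mapp B x) := by
  simp [mapp, Matrix.toEuclideanLin_apply, Matrix.mulVec_mulVec]

lemma mapp_one (x : Pt n) : mapp 1 x = x := by
  simp [mapp, Matrix.toEuclideanLin_apply]

lemma mapp_sub (A : Matrix (Fin n) (Fin n) ℝ) (x y : Pt n) :
    mapp A (x - y) = mapp A x - mapp A y :=
  map_sub (Matrix.toEuclideanLin A) x y

lemma one_lt_multiset_prod {s : Multiset ℝ} (hne : s ≠ 0) (h : ∀ x ∈ s, 1 < x) :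
    1 < s.prod := by
  induction s using Multiset.induction_on with
  | empty => exact absurd rfl hne
  | cons a t ih =>
    rw [Multiset.prod_cons]
    rcases eq_or_ne t 0 with rfl | ht
    · simpa using h a (Multiset.mem_cons_self a _)
    · have h1 : 1 < a := h a (Multiset.mem_cons_self a t)
      have h2 : 1 < t.prod := ih ht (fun x hx => h x (Multiset.mem_cons_of_mem hx))
      nlinarith

lemma one_lt_abs_det {A : Matrix (Fin n) (Fin n) ℝ} (hn : 0 < n)
    (hA : IsExpandingMatrix A) : 1 < |A.det| := by
  classical
  set B := A.map (fun a => (a : ℂ)) with hB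
  have hdetB : B.det = (A.det : ℂ) := by
    rw [hB]
    exact (RingHom.map_det Complex.ofRealHom A).symm
  have hroots : ∀ μ ∈ B.charpoly.roots, 1 < ‖μ‖ := by
    intro μ hμ
    apply hA
    have hroot : B.charpoly.eval μ = 0 := Polynomial.isRoot_of_mem_roots hμ
    rw [spectrum.mem_iff]
    intro hunit
    have hdet : (Matrix.scalar (Fin n) μ - B).det ≠ 0 := by
      have halg : algebraMap ℂ (Matrix (Fin n) (Fin n) ℂ) μ = Matrix.scalar (Fin n) μ := by
        rw [Matrix.scalar_apply, Matrix.algebraMap_eq_diagonal]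
        rfl
      have hu : IsUnit ((Matrix.scalar (Fin n) μ - B).det) := by
        rw [← Matrix.isUnit_iff_isUnit_det, ← halg]
        exact hunit
      exact hu.ne_zero
    apply hdet
    rw [← hroot, Matrix.charpoly, eval_det, Matrix.matPolyEquiv_charmatrix]
    simp [Polynomial.eval_sub]
  have hsplit : B.charpoly.roots.card = B.charpoly.natDegree :=
    Polynomial.splits_iff_card_roots.mp (IsAlgClosed.splits B.charpoly)
  have hdeg : B.charpoly.natDegree = n := by
    rw [Matrix.charpoly_natDegree_eq_dim, Fintype.card_fin]
  have hcard : B.charpoly.roots.card = n := by rw [hsplit, hdeg]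
  have hne : (B.charpoly.roots.map (fun μ : ℂ => ‖μ‖)) ≠ 0 := by
    intro h
    have := congrArg Multiset.card h
    rw [Multiset.card_map, hcard] at this
    simp at this
    omega
  have habs : ‖B.det‖ = (B.charpoly.roots.map (fun μ : ℂ => ‖μ‖)).prod := by
    rw [Matrix.det_eq_prod_roots_charpoly]
    exact map_multiset_prod (normHom : ℂ →*₀ ℝ) _
  have := one_lt_multiset_prod hne (by
    intro x hx
    obtain ⟨μ, hμ, rfl⟩ := Multiset.mem_map.mp hx
    exact hroots μ hμ)
  rw [← habs, hdetB, Complex.norm_real, Real.norm_eq_abs] at this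
  exact this

instance : DecidableEq (Pt n) := Classical.decEq _

/-- Finite words over the digit set. -/
def WordSet (D : Finset (Pt n)) : ℕ → Finset (List (Pt n))
  | 0 => {[]}
  | (m+1) => Finset.image₂ List.cons D (WordSet D m)

lemma mem_WordSet {D : Finset (Pt n)} : ∀ {m : ℕ} {l : List (Pt n)},
    l ∈ WordSet D m ↔ l.length = m ∧ ∀ d ∈ l, d ∈ D := by
  intro m
  induction m with
  | zero =>
    intro l
    simp only [WordSet, Finset.mem_singleton]
    constructor
    · rintro rfl; simp
    · rintro ⟨hlen, -⟩; exact List.length_eq_zero_iff.mp hlen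
  | succ m ih =>
    intro l
    simp only [WordSet, Finset.mem_image₂]
    constructor
    · rintro ⟨d, hd, l', hl', rfl⟩
      obtain ⟨hlen, hmem⟩ := ih.mp hl'
      refine ⟨by simp [hlen], ?_⟩
      intro x hx
      rcases List.mem_cons.mp hx with rfl | hx
      · exact hd
      · exact hmem x hx
    · rintro ⟨hlen, hmem⟩
      cases l with
      | nil => simp at hlen
      | cons d l' =>
        exact ⟨d, hmem d (List.mem_cons_self), l',
          ih.mpr ⟨by simpa using hlen, fun x hx => hmem x (List.mem_cons_of_mem d hx)⟩, rfl⟩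

lemma card_WordSet (D : Finset (Pt n)) (m : ℕ) : (WordSet D m).card = D.card ^ m := by
  induction m with
  | zero => simp [WordSet]
  | succ m ih =>
    rw [WordSet, Finset.card_image₂ (fun a l a' l' h => by simpa using h), ih]
    ring

end HwAux
open HwAux in
/-- Corollary 3.0: if `0 < ℋ^s_w(K) < ∞`, two words are incomparable (neither a
prefix of the other) iff `ℋ^s_w(K_𝐢 ∩ K_𝐣) = 0`. -/
theorem stmt7 {n : ℕ} (hn : 0 < n) (A : Matrix (Fin n) (Fin n) ℝ)
    (hA : IsExpandingMatrix A)
    (hAnorm : ∀ x : Pt n, ‖x‖ ≤ ‖mapp A x‖)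
    (hAeq : ∀ x : Pt n, ‖x‖ = ‖mapp A x‖ → x = 0)
    (w : Pt n → ℝ) (hw : IsPseudoNorm A w)
    (D : Finset (Pt n)) (hD0 : (0 : Pt n) ∈ D)
    (K : Set (Pt n)) (hK : IsSelfAffineSet A D K)
    (s : ℝ) (hs : s = n * Real.log D.card / Real.log |A.det|)
    (hpos : 0 < Hw w s K) (hfin : Hw w s K < ⊤)
    (i j : List (Pt n)) (hi : ∀ d ∈ i, d ∈ D) (hj : ∀ d ∈ j, d ∈ D) :
    ((¬ i <+: j) ∧ (¬ j <+: i)) ↔ Hw w s (fWord A i '' K ∩ fWord A j '' K) = 0 := by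
  classical
  -- nondegeneracy
  have hq : 1 < |A.det| := one_lt_abs_det hn hA
  have hdet0 : A.det ≠ 0 := by
    intro h
    rw [h, abs_zero] at hq
    linarith
  have hN1 : 0 < D.card := Finset.card_pos.mpr ⟨0, hD0⟩
  have hN2 : 2 ≤ D.card := by
    by_contra hlt
    push_neg at hlt
    have hcard1 : D.card = 1 := by omega
    have hs00 : s = 0 := by
      rw [hs, hcard1]
      simp
    rw [hs00, Hw_zero_top] at hfin
    exact absurd hfin (by simp)
  have hlogq : 0 < Real.log |A.det| := Real.log_pos hq
  have hlogN : 0 < Real.log D.card := Real.log_pos (by exact_mod_cast hN2)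
  have hs0 : 0 < s := by
    rw [hs]
    exact div_pos (mul_pos (by exact_mod_cast hn) hlogN) hlogq
  -- scaling constant
  obtain ⟨c0, hc0def⟩ : ∃ c0 : ℝ, c0 = |A.det| ^ ((1:ℝ)/n) := ⟨_, rfl⟩
  have hc01 : 1 < c0 := by
    rw [hc0def]
    exact (Real.one_lt_rpow_iff_of_pos (by positivity)).mpr (Or.inl ⟨hq, by positivity⟩)
  have hc00 : 0 < c0 := lt_trans one_pos hc01
  have hc0ne : c0 ≠ 0 := ne_of_gt hc00
  -- matrix inverse facts
  have hAinvA : ∀ x : Pt n, mapp A⁻¹ (mapp A x) = x := fun x => by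
    rw [← mapp_mul, Matrix.nonsing_inv_mul A (isUnit_iff_ne_zero.mpr hdet0), mapp_one]
  have hAAinv : ∀ x : Pt n, mapp A (mapp A⁻¹ x) = x := fun x => by
    rw [← mapp_mul, Matrix.mul_nonsing_inv A (isUnit_iff_ne_zero.mpr hdet0), mapp_one]
  have hwdown : ∀ z : Pt n, w (mapp A⁻¹ z) = c0⁻¹ * w z := by
    intro z
    have h := hw.scaling (mapp A⁻¹ z)
    rw [hAAinv, ← hc0def] at h
    rw [h]
    field_simp
  have hfdiff : ∀ (d : Pt n) (x y : Pt n), fIFS A d x - fIFS A d y = mapp A⁻¹ (x - y) := by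
    intro d x y
    rw [fIFS, fIFS, ← mapp_sub, add_sub_add_right_eq_sub]
  have hTscale : ∀ d : Pt n, ∀ x y : Pt n,
      w (fIFS A d x - fIFS A d y) = c0⁻¹ * w (x - y) := by
    intro d x y
    rw [hfdiff, hwdown]
  have hSscale : ∀ d : Pt n, ∀ x y : Pt n,
      w ((fun z => mapp A z - d) x - (fun z => mapp A z - d) y) = (c0⁻¹)⁻¹ * w (x - y) := by
    intro d x y
    simp only
    rw [inv_inv, show mapp A x - d - (mapp A y - d) = mapp A (x - y) by rw [mapp_sub]; abel,
      hc0def]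
    exact hw.scaling _
  have hST : ∀ (d : Pt n) (x : Pt n), (fun z => mapp A z - d) (fIFS A d x) = x := by
    intro d x
    simp only [fIFS]
    rw [hAAinv]
    exact add_sub_cancel_right x d
  -- the contraction factor in measure
  obtain ⟨bval, hbdef⟩ : ∃ b : ℝ≥0∞, b = ENNReal.ofReal c0⁻¹ ^ s := ⟨_, rfl⟩
  have hb0 : bval ≠ 0 := by
    rw [hbdef]
    exact (ENNReal.rpow_pos (ENNReal.ofReal_pos.mpr (by positivity)) ENNReal.ofReal_ne_top).ne'
  have hc0s : c0 ^ s = (D.card : ℝ) := by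
    rw [hc0def, ← Real.rpow_mul (abs_nonneg _),
      Real.rpow_def_of_pos (by positivity : (0:ℝ) < |A.det|)]
    rw [show Real.log |A.det| * ((1/(n:ℝ)) * s) = Real.log D.card by
      rw [hs]
      have hn' : (n:ℝ) ≠ 0 := Nat.cast_ne_zero.mpr hn.ne'
      have hlogA : Real.log A.det ≠ 0 := by
        rw [← Real.log_abs]; exact hlogq.ne'
      field_simp]
    exact Real.exp_log (by exact_mod_cast hN1)
  have hbN : (D.card : ℝ≥0∞) * bval = 1 := by
    rw [hbdef, ENNReal.ofReal_rpow_of_pos (inv_pos.mpr hc00), Real.inv_rpow (le_of_lt hc00),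
      hc0s, ENNReal.ofReal_inv_of_pos (by exact_mod_cast hN1), ENNReal.ofReal_natCast]
    exact ENNReal.mul_inv_cancel (by exact_mod_cast hN1.ne') (by simp)
  -- Hw transforms under the maps of the IFS
  have hHwfIFS : ∀ (d : Pt n) (E : Set (Pt n)), Hw w s (fIFS A d '' E) = bval * Hw w s E := by
    intro d E
    rw [hbdef]
    exact Hw_image_eq w hs0 (inv_pos.mpr hc00) (hTscale d) (hSscale d) (hST d) E
  have hfWord_append : ∀ (a b : List (Pt n)) (x : Pt n),
      fWord A (a ++ b) x = fWord A a (fWord A b x) := by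
    intro a b x
    rw [fWord, List.foldr_append]
    rfl
  have hHwWord : ∀ (l : List (Pt n)) (E : Set (Pt n)),
      Hw w s (fWord A l '' E) = bval ^ l.length * Hw w s E := by
    intro l
    induction l with
    | nil =>
      intro E
      rw [show fWord A ([] : List (Pt n)) = id from rfl, Set.image_id]
      simp
    | cons d l ih =>
      intro E
      have himg : fWord A (d :: l) '' E = fIFS A d '' (fWord A l '' E) := by
        rw [Set.image_image]
        rfl
      rw [himg, hHwfIFS, ih, List.length_cons, pow_succ]
      ring
  -- continuity and measurability
  have hcontAinv : Continuous (mapp A⁻¹) :=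
    (Matrix.toEuclideanLin A⁻¹).continuous_of_finiteDimensional
  have hcontf : ∀ d : Pt n, Continuous (fIFS A d) := fun d =>
    hcontAinv.comp (continuous_id.add continuous_const)
  have hcontWord : ∀ l : List (Pt n), Continuous (fWord A l) := by
    intro l
    induction l with
    | nil => exact continuous_id
    | cons d l ih => exact (hcontf d).comp ih
  have hmeasKl : ∀ l : List (Pt n), MeasurableSet (fWord A l '' K) := fun l =>
    (hK.2.1.image (hcontWord l)).isClosed.measurableSet
  -- one-step decomposition of K
  have hone : (⋃ d ∈ D, fIFS A d '' K) = K := by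
    have h2 : mapp A⁻¹ '' (mapp A '' K) = K := by
      rw [Set.image_image]
      simp only [hAinvA, Set.image_id']
    calc (⋃ d ∈ D, fIFS A d '' K) = ⋃ d ∈ D, mapp A⁻¹ '' ((fun x => x + d) '' K) := by
          refine Set.iUnion₂_congr fun d hd => ?_
          rw [Set.image_image]
          rfl
      _ = mapp A⁻¹ '' (⋃ d ∈ D, (fun x => x + d) '' K) := by rw [Set.image_iUnion₂]
      _ = mapp A⁻¹ '' (mapp A '' K) := by rw [hK.2.2]
      _ = K := h2
  have hDsub : ∀ d ∈ D, fIFS A d '' K ⊆ K := by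
    intro d hd
    conv_rhs => rw [← hone]
    exact Set.subset_biUnion_of_mem (u := fun d => fIFS A d '' K) hd
  have hWordSub : ∀ l : List (Pt n), (∀ d ∈ l, d ∈ D) → fWord A l '' K ⊆ K := by
    intro l
    induction l with
    | nil =>
      intro _
      rw [show fWord A ([] : List (Pt n)) = id from rfl, Set.image_id]
    | cons d l ih =>
      intro hdl
      have h1 : fWord A (d :: l) '' K = fIFS A d '' (fWord A l '' K) := by
        rw [Set.image_image]
        rfl
      rw [h1]
      refine subset_trans
        (Set.image_mono (ih fun x hx => hdl x (List.mem_cons_of_mem d hx))) ?_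
      exact hDsub d (hdl d (List.mem_cons_self))
  -- decomposition by words of length m
  have hdecomp : ∀ m : ℕ, (⋃ l ∈ WordSet D m, fWord A l '' K) = K := by
    intro m
    induction m with
    | zero =>
      rw [show WordSet D 0 = {([] : List (Pt n))} from rfl]
      simp only [Finset.mem_singleton, Set.iUnion_iUnion_eq_left]
      rw [show fWord A ([] : List (Pt n)) = id from rfl, Set.image_id]
    | succ m ih =>
      calc (⋃ l ∈ WordSet D (m+1), fWord A l '' K)
          = ⋃ d ∈ D, ⋃ l ∈ WordSet D m, fWord A (d :: l) '' K := by
            ext x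
            simp only [Set.mem_iUnion, exists_prop]
            constructor
            · rintro ⟨l, hl, hx⟩
              obtain ⟨d, hd, l', hl', rfl⟩ := Finset.mem_image₂.mp hl
              exact ⟨d, hd, l', hl', hx⟩
            · rintro ⟨d, hd, l', hl', hx⟩
              exact ⟨d :: l', Finset.mem_image₂.mpr ⟨d, hd, l', hl', rfl⟩, hx⟩
        _ = ⋃ d ∈ D, fIFS A d '' (⋃ l ∈ WordSet D m, fWord A l '' K) := by
            refine Set.iUnion₂_congr fun d hd => ?_
            rw [Set.image_iUnion₂]
            refine Set.iUnion₂_congr fun l hl => ?_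
            rw [Set.image_image]
            rfl
        _ = ⋃ d ∈ D, fIFS A d '' K := by rw [ih]
        _ = K := hone
  -- sum over words of fixed length
  have hsumW : ∀ m : ℕ, ∑ l ∈ WordSet D m, Hw w s (fWord A l '' K) = Hw w s K := by
    intro m
    have h1 : ∀ l ∈ WordSet D m, Hw w s (fWord A l '' K) = bval ^ m * Hw w s K := by
      intro l hl
      rw [hHwWord, (mem_WordSet.mp hl).1]
    rw [Finset.sum_congr rfl h1, Finset.sum_const, card_WordSet, nsmul_eq_mul]
    push_cast
    rw [← mul_assoc, ← mul_pow, hbN, one_pow, one_mul]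
  -- the Borel measure
  obtain ⟨C, hC, α₁, hα₁, α₂, hα₂, hcomp1, hcomp2⟩ := hw.comparable
  have hmet : (muOM w hs0).IsMetric :=
    muOM_isMetric w hs0 hC hα₁ hα₂ (fun x hx => (hcomp1 x hx).1) (fun x hx => (hcomp2 x hx).1)
  set ν := nuHw w hs0 hmet with hνdef
  have hνval : ∀ E : Set (Pt n), MeasurableSet E → ν E = Hw w s E := fun E hE =>
    nuHw_apply w hs0 hmet hE
  -- pairwise intersections of distinct words of the same length are null
  have pair_null : ∀ m : ℕ, ∀ a ∈ WordSet D m, ∀ b ∈ WordSet D m, a ≠ b →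
      Hw w s (fWord A a '' K ∩ fWord A b '' K) = 0 := by
    intro m a ha b hb hab
    have hKmeas : MeasurableSet K := hK.2.1.isClosed.measurableSet
    have hb' : b ∈ (WordSet D m).erase a := Finset.mem_erase.mpr ⟨hab.symm, hb⟩
    set Ka := fWord A a '' K with hKa
    set Kb := fWord A b '' K with hKb
    set W2 := ((WordSet D m).erase a).erase b with hW2
    have hsplit : K ⊆ (Ka ∪ Kb) ∪ ⋃ l ∈ W2, fWord A l '' K := by
      conv_lhs => rw [← hdecomp m]
      intro x hx
      rw [Set.mem_iUnion₂] at hx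
      obtain ⟨l, hl, hxl⟩ := hx
      by_cases h1 : l = a
      · subst h1; exact Or.inl (Or.inl hxl)
      by_cases h2 : l = b
      · subst h2; exact Or.inl (Or.inr hxl)
      refine Or.inr (Set.mem_iUnion₂.mpr ⟨l, ?_, hxl⟩)
      exact Finset.mem_erase.mpr ⟨h2, Finset.mem_erase.mpr ⟨h1, hl⟩⟩
    have hle : ν K ≤ ν (Ka ∪ Kb) + ∑ l ∈ W2, ν (fWord A l '' K) := by
      calc ν K ≤ ν ((Ka ∪ Kb) ∪ ⋃ l ∈ W2, fWord A l '' K) := measure_mono hsplit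
        _ ≤ ν (Ka ∪ Kb) + ν (⋃ l ∈ W2, fWord A l '' K) := measure_union_le _ _
        _ ≤ ν (Ka ∪ Kb) + ∑ l ∈ W2, ν (fWord A l '' K) :=
            add_le_add_right (measure_biUnion_finset_le _ _) _
    have hsum' : ν Ka + (ν Kb + ∑ l ∈ W2, ν (fWord A l '' K)) = Hw w s K := by
      rw [hKa, hKb, hW2, Finset.add_sum_erase _ (fun l => ν (fWord A l '' K)) hb',
        Finset.add_sum_erase _ (fun l => ν (fWord A l '' K)) ha]
      rw [Finset.sum_congr rfl (fun l hl => hνval _ (hmeasKl l))]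
      exact hsumW m
    have hkey : Hw w s K + ν (Ka ∩ Kb) ≤ Hw w s K := by
      have hui : ν (Ka ∪ Kb) + ν (Ka ∩ Kb) = ν Ka + ν Kb :=
        measure_union_add_inter Ka (hmeasKl b)
      calc Hw w s K + ν (Ka ∩ Kb) = ν K + ν (Ka ∩ Kb) := by rw [hνval K hKmeas]
        _ ≤ (ν (Ka ∪ Kb) + ∑ l ∈ W2, ν (fWord A l '' K)) + ν (Ka ∩ Kb) :=
            add_le_add_left hle _
        _ = (ν (Ka ∪ Kb) + ν (Ka ∩ Kb)) + ∑ l ∈ W2, ν (fWord A l '' K) := by ring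
        _ = (ν Ka + ν Kb) + ∑ l ∈ W2, ν (fWord A l '' K) := by rw [hui]
        _ = ν Ka + (ν Kb + ∑ l ∈ W2, ν (fWord A l '' K)) := by ring
        _ = Hw w s K := hsum'
    have h0 : ν (Ka ∩ Kb) = 0 := by
      have h1 : Hw w s K + ν (Ka ∩ Kb) ≤ Hw w s K + 0 := by simpa using hkey
      simpa using (ENNReal.add_le_add_iff_left hfin.ne).mp h1
    rw [← hνval _ ((hmeasKl a).inter (hmeasKl b))]
    exact h0
  -- main equivalence
  constructor
  · rintro ⟨hij, hji⟩
    set m := max i.length j.length with hm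
    have him : i.length ≤ m := le_max_left _ _
    have hjm : j.length ≤ m := le_max_right _ _
    have hKi : fWord A i '' K = ⋃ t ∈ WordSet D (m - i.length), fWord A (i ++ t) '' K := by
      conv_lhs => rw [← hdecomp (m - i.length)]
      rw [Set.image_iUnion₂]
      refine Set.iUnion₂_congr fun t ht => ?_
      rw [Set.image_image,
        show (fun x => fWord A i (fWord A t x)) = fWord A (i ++ t) from
          funext fun x => (hfWord_append i t x).symm]
    have hKj : fWord A j '' K = ⋃ u ∈ WordSet D (m - j.length), fWord A (j ++ u) '' K := by
      conv_lhs => rw [← hdecomp (m - j.length)]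
      rw [Set.image_iUnion₂]
      refine Set.iUnion₂_congr fun u hu => ?_
      rw [Set.image_image,
        show (fun x => fWord A j (fWord A u x)) = fWord A (j ++ u) from
          funext fun x => (hfWord_append j u x).symm]
    have hmem_it : ∀ t ∈ WordSet D (m - i.length), (i ++ t) ∈ WordSet D m := by
      intro t ht
      obtain ⟨hlen, hd⟩ := mem_WordSet.mp ht
      refine mem_WordSet.mpr ⟨by rw [List.length_append, hlen]; omega, ?_⟩
      intro d hd'
      rcases List.mem_append.mp hd' with h | h
      exacts [hi d h, hd d h]
    have hmem_ju : ∀ u ∈ WordSet D (m - j.length), (j ++ u) ∈ WordSet D m := by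
      intro u hu
      obtain ⟨hlen, hd⟩ := mem_WordSet.mp hu
      refine mem_WordSet.mpr ⟨by rw [List.length_append, hlen]; omega, ?_⟩
      intro d hd'
      rcases List.mem_append.mp hd' with h | h
      exacts [hj d h, hd d h]
    have hneq : ∀ t ∈ WordSet D (m - i.length), ∀ u ∈ WordSet D (m - j.length),
        i ++ t ≠ j ++ u := by
      intro t ht u hu heq
      rcases le_total i.length j.length with hle | hle
      · apply hij
        have h1 : i <+: j ++ u := heq ▸ List.prefix_append i t
        exact List.prefix_of_prefix_length_le h1 (List.prefix_append j u) hle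
      · apply hji
        have h1 : j <+: i ++ t := heq ▸ List.prefix_append j u
        exact List.prefix_of_prefix_length_le h1 (List.prefix_append i t) hle
    have hbig : ν (⋃ t ∈ WordSet D (m - i.length), ⋃ u ∈ WordSet D (m - j.length),
        (fWord A (i ++ t) '' K ∩ fWord A (j ++ u) '' K)) = 0 := by
      rw [← Finset.set_biUnion_coe, measure_biUnion_null_iff (Finset.countable_toSet _)]
      intro t ht
      rw [← Finset.set_biUnion_coe, measure_biUnion_null_iff (Finset.countable_toSet _)]
      intro u hu
      rw [hνval _ ((hmeasKl _).inter (hmeasKl _))]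
      exact pair_null m _ (hmem_it t ht) _ (hmem_ju u hu) (hneq t ht u hu)
    have hsub : fWord A i '' K ∩ fWord A j '' K ⊆
        ⋃ t ∈ WordSet D (m - i.length), ⋃ u ∈ WordSet D (m - j.length),
          (fWord A (i ++ t) '' K ∩ fWord A (j ++ u) '' K) := by
      rintro x ⟨hxi, hxj⟩
      rw [hKi, Set.mem_iUnion₂] at hxi
      rw [hKj, Set.mem_iUnion₂] at hxj
      obtain ⟨t, ht, hxt⟩ := hxi
      obtain ⟨u, hu, hxu⟩ := hxj
      exact Set.mem_iUnion₂.mpr ⟨t, ht, Set.mem_iUnion₂.mpr ⟨u, hu, ⟨hxt, hxu⟩⟩⟩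
    rw [← hνval _ ((hmeasKl i).inter (hmeasKl j))]
    exact measure_mono_null hsub hbig
  · intro h0
    constructor
    · intro hpre
      obtain ⟨t, rfl⟩ := hpre
      have htD : ∀ d ∈ t, d ∈ D := fun d hd => hj d (List.mem_append_right i hd)
      have hsub2 : fWord A (i ++ t) '' K ⊆ fWord A i '' K := by
        have h1 : fWord A (i ++ t) '' K = fWord A i '' (fWord A t '' K) := by
          rw [Set.image_image,
            show (fun x => fWord A i (fWord A t x)) = fWord A (i ++ t) from
              funext fun x => (hfWord_append i t x).symm]
        rw [h1]
        exact Set.image_mono (hWordSub t htD)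
      rw [Set.inter_eq_self_of_subset_right hsub2, hHwWord] at h0
      rcases mul_eq_zero.mp h0 with h | h
      · exact absurd h (pow_ne_zero _ hb0)
      · exact absurd h hpos.ne'
    · intro hpre
      obtain ⟨t, rfl⟩ := hpre
      have htD : ∀ d ∈ t, d ∈ D := fun d hd => hi d (List.mem_append_right j hd)
      have hsub2 : fWord A (j ++ t) '' K ⊆ fWord A j '' K := by
        have h1 : fWord A (j ++ t) '' K = fWord A j '' (fWord A t '' K) := by
          rw [Set.image_image,
            show (fun x => fWord A j (fWord A t x)) = fWord A (j ++ t) from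
              funext fun x => (hfWord_append j t x).symm]
        rw [h1]
        exact Set.image_mono (hWordSub t htD)
      rw [Set.inter_eq_self_of_subset_left hsub2, hHwWord] at h0
      rcases mul_eq_zero.mp h0 with h | h
      · exact absurd h (pow_ne_zero _ hb0)
      · exact absurd h hpos.ne'
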